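/- If for some α₀ > 0 the polynomial h(α₀, x) (in x) has a repeated real root (i.e., there is x₀ with h(α₀,x₀) = 0 and ∂h/∂x(α₀,x₀) = 0), then α₀ = 7/4. -/

import Mathlib

/-- h(α,x), the degree-6 factor of f_α³(x) - x -/
noncomputable def h (α x : ℝ) : ℝ :=
  α ^ 6 * x ^ 6 - α ^ 5 * x ^ 5 + (-3 * α ^ 5 + α ^ 4) * x ^ 4 + (2 * α ^ 4 - α ^ 3) * x ^ 3
    + (3 * α ^ 4 - 3 * α ^ 3 + α ^ 2) * x ^ 2 + (-α ^ 3 + 2 * α ^ 2 - α) * x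
    - α ^ 3 + 2 * α ^ 2 - α + 1

theorem repeated_root_only_at_seven_fourths (α₀ : ℝ) (hα : 0 < α₀)
    (x₀ : ℝ) (hroot : h α₀ x₀ = 0) (hder : deriv (fun x => h α₀ x) x₀ = 0) :
    α₀ = 7 / 4 := by
  have H : HasDerivAt (fun x : ℝ => h α₀ x)
      (6 * α₀ ^ 6 * x₀ ^ 5 - 5 * α₀ ^ 5 * x₀ ^ 4 + 4 * (-3 * α₀ ^ 5 + α₀ ^ 4) * x₀ ^ 3
        + 3 * (2 * α₀ ^ 4 - α₀ ^ 3) * x₀ ^ 2 + 2 * (3 * α₀ ^ 4 - 3 * α₀ ^ 3 + α₀ ^ 2) * x₀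
        + (-α₀ ^ 3 + 2 * α₀ ^ 2 - α₀)) x₀ := by
    have h6 := HasDerivAt.const_mul (α₀ ^ 6) (hasDerivAt_pow 6 x₀)
    have h5 := HasDerivAt.const_mul (α₀ ^ 5) (hasDerivAt_pow 5 x₀)
    have h4 := HasDerivAt.const_mul (-3 * α₀ ^ 5 + α₀ ^ 4) (hasDerivAt_pow 4 x₀)
    have h3 := HasDerivAt.const_mul (2 * α₀ ^ 4 - α₀ ^ 3) (hasDerivAt_pow 3 x₀)
    have h2 := HasDerivAt.const_mul (3 * α₀ ^ 4 - 3 * α₀ ^ 3 + α₀ ^ 2) (hasDerivAt_pow 2 x₀)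
    have h1 := HasDerivAt.const_mul (-α₀ ^ 3 + 2 * α₀ ^ 2 - α₀) (hasDerivAt_id x₀)
    have := (((((((((h6.sub h5).add h4).add h3).add h2).add h1).sub_const
      (α₀ ^ 3)).add_const (2 * α₀ ^ 2)).sub_const α₀).add_const 1)
    unfold h
    refine HasDerivAt.congr_deriv (this.congr_of_eventuallyEq (Filter.Eventually.of_forall fun x => ?_)) ?_
    · simp only [Pi.add_apply, Pi.sub_apply, id]
    · push_cast
      ring
  rw [H.deriv] at hder
  unfold h at hroot
  have hR : α₀ ^ 36 * (4 * α₀ - 7) ^ 3 * (16 * α₀ ^ 2 - 4 * α₀ + 7) ^ 2 = 0 := by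
    linear_combination (-(((16807:ℝ) * α₀ ^ 36 + (-26068:ℝ) * α₀ ^ 37 + (50176:ℝ) * α₀ ^ 38 + (-38080:ℝ) * α₀ ^ 39 + (4864:ℝ) * α₀ ^ 40 + (2048:ℝ) * α₀ ^ 41) * x₀ ^ 0 + ((14406:ℝ) * α₀ ^ 37 + (-49392:ℝ) * α₀ ^ 38 + (94864:ℝ) * α₀ ^ 39 + (-130368:ℝ) * α₀ ^ 40 + (97792:ℝ) * α₀ ^ 41 + (-33792:ℝ) * α₀ ^ 42 + (4096:ℝ) * α₀ ^ 43) * x₀ ^ 1 + ((10976:ℝ) * α₀ ^ 39 + (-51744:ℝ) * α₀ ^ 40 + (92288:ℝ) * α₀ ^ 41 + (-138240:ℝ) * α₀ ^ 42 + (100352:ℝ) * α₀ ^ 43 + (-24576:ℝ) * α₀ ^ 44) * x₀ ^ 2 + ((5488:ℝ) * α₀ ^ 40 + (-9408:ℝ) * α₀ ^ 41 + (17920:ℝ) * α₀ ^ 42 + (-15360:ℝ) * α₀ ^ 43 + (4096:ℝ) * α₀ ^ 44) * x₀ ^ 3 + ((32928:ℝ) * α₀ ^ 41 + (-56448:ℝ)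 * α₀ ^ 42 + (107520:ℝ) * α₀ ^ 43 + (-92160:ℝ) * α₀ ^ 44 + (24576:ℝ) * α₀ ^ 45) * x₀ ^ 4)) * hroot + (-(((5145:ℝ) * α₀ ^ 36 + (-11564:ℝ) * α₀ ^ 37 + (21504:ℝ) * α₀ ^ 38 + (-23360:ℝ) * α₀ ^ 39 + (11520:ℝ) * α₀ ^ 40 + (-2048:ℝ) * α₀ ^ 41) * x₀ ^ 0 + ((-2401:ℝ) * α₀ ^ 36 + (1372:ℝ) * α₀ ^ 37 + (5096:ℝ) * α₀ ^ 38 + (-21840:ℝ) * α₀ ^ 39 + (42176:ℝ) * α₀ ^ 40 + (-43008:ℝ) * α₀ ^ 41 + (21504:ℝ) * α₀ ^ 42 + (-4096:ℝ) * α₀ ^ 43) * x₀ ^ 1 + ((-2401:ℝ) * α₀ ^ 37 + (9604:ℝ) * α₀ ^ 38 + (-17248:ℝ) * α₀ ^ 39 + (24640:ℝ) * α₀ ^ 40 + (-17152:ℝ) * α₀ ^ 41 + (4096:ℝ) * α₀ ^ 42) * x₀ ^ 2 + ((-2744:ℝ) * α₀ ^ 39 + (15680:ℝ) * α₀ ^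 40 + (-27776:ℝ) * α₀ ^ 41 + (43520:ℝ) * α₀ ^ 42 + (-32768:ℝ) * α₀ ^ 43 + (8192:ℝ) * α₀ ^ 44) * x₀ ^ 3 + (0) * x₀ ^ 4 + ((-5488:ℝ) * α₀ ^ 41 + (9408:ℝ) * α₀ ^ 42 + (-17920:ℝ) * α₀ ^ 43 + (15360:ℝ) * α₀ ^ 44 + (-4096:ℝ) * α₀ ^ 45) * x₀ ^ 5)) * hder
  have h36 : (0:ℝ) < α₀ ^ 36 := pow_pos hα 36
  have h16 : (0:ℝ) < 16 * α₀ ^ 2 - 4 * α₀ + 7 := by nlinarith [sq_nonneg (8 * α₀ - 1)]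
  have hz : (4 * α₀ - 7) ^ 3 = 0 := by
    rcases mul_eq_zero.mp hR with h' | h'
    · rcases mul_eq_zero.mp h' with h'' | h''
      · exact absurd h'' (ne_of_gt h36)
      · exact h''
    · exact absurd h' (ne_of_gt (pow_pos h16 2))
  have := pow_eq_zero_iff (n := 3) (by norm_num) |>.mp hz
  linarith
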